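/- arXiv:1508.03921 — 2 statements merged into one kernel-verified Lean document; each statement's English description precedes it below -/
import Mathlib

section
/- For every ε > 0 there exists h' > 0 such that for every h ∈ (0, h'), for all stopping times ρ₀, τ₀ ∈ 𝒯: X_{ρ₀} > E[U(ρ₀, τ_h(ρ₀)) | 𝓕_{ρ₀}] − 2ε and Y_{τ₀} < E[U(ρ_h(τ₀), τ₀) | 𝓕_{τ₀}] + 2ε almost surely. -/
/-!
Common setup for "On the non-zero-sum stopping game ending at the maximum of the stopping
strategies".  Time is indexed by `[0,∞] = ℝ≥0∞`.  Since `Ω` is at most countable and `ℙ`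
charges every point, essential suprema/infima over families of stopping times coincide with
the pointwise ones, which is how they are formalized below.
-/

open MeasureTheory Filter Set
open scoped ENNReal Topology

noncomputable section

namespace StoppingGames

variable {Ω : Type*} [mΩ : MeasurableSpace Ω]

/-- `|a - b|` on `[0,∞]`, via truncated subtraction. -/
def dd (a b : ℝ≥0∞) : ℝ≥0∞ := (a - b) + (b - a)

/-- `𝒯`, the set of stopping times with values in `[0,∞]`. -/
def ST (𝓕 : Filtration ℝ≥0∞ mΩ) : Set (Ω → ℝ≥0∞) := {τ | IsStoppingTime 𝓕 (fun ω => (τ ω : WithTop ℝ≥0∞))}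

/-- `𝒯_σ`, the stopping times no less than `σ`. -/
def STge (𝓕 : Filtration ℝ≥0∞ mΩ) (σ : Ω → ℝ≥0∞) : Set (Ω → ℝ≥0∞) :=
  {τ | IsStoppingTime 𝓕 (fun ω => (τ ω : WithTop ℝ≥0∞)) ∧ ∀ ω, σ ω ≤ τ ω}

/-- `𝒯_{t+}`, the stopping times strictly greater than `t`. -/
def STgt (𝓕 : Filtration ℝ≥0∞ mΩ) (t : ℝ≥0∞) : Set (Ω → ℝ≥0∞) :=
  {τ | IsStoppingTime 𝓕 (fun ω => (τ ω : WithTop ℝ≥0∞)) ∧ ∀ ω, t < τ ω}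

/-- The class `𝕋` of jointly measurable maps `φ : [0,∞] × Ω → [0,∞]` with
`φ(t,·) ∈ 𝒯_{t+}` for every finite `t`. -/
def IsTT (𝓕 : Filtration ℝ≥0∞ mΩ) (φ : ℝ≥0∞ → Ω → ℝ≥0∞) : Prop :=
  Measurable (Function.uncurry φ) ∧ ∀ t : ℝ≥0∞, t ≠ ∞ → φ t ∈ STgt 𝓕 t

/-- A stopping strategy `ρ = (ρ₀, ρ₁) ∈ 𝔗`. -/
def IsStrategy (𝓕 : Filtration ℝ≥0∞ mΩ) (ρ : (Ω → ℝ≥0∞) × (ℝ≥0∞ → Ω → ℝ≥0∞)) : Prop :=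
  IsStoppingTime 𝓕 (fun ω => (ρ.1 ω : WithTop ℝ≥0∞)) ∧ IsTT 𝓕 ρ.2

/-- `𝔗_σ`, the stopping strategies whose first component is `≥ σ`. -/
def IsStrategyGe (𝓕 : Filtration ℝ≥0∞ mΩ) (σ : Ω → ℝ≥0∞)
    (ρ : (Ω → ℝ≥0∞) × (ℝ≥0∞ → Ω → ℝ≥0∞)) : Prop :=
  IsStrategy 𝓕 ρ ∧ ∀ ω, σ ω ≤ ρ.1 ω

/-- `ρ[τ] = ρ₀ 1_{ρ₀ ≤ τ₀} + ρ₁(τ₀) 1_{ρ₀ > τ₀}`. -/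
def play (ρ τ : (Ω → ℝ≥0∞) × (ℝ≥0∞ → Ω → ℝ≥0∞)) : Ω → ℝ≥0∞ := fun ω =>
  if ρ.1 ω ≤ τ.1 ω then ρ.1 ω else ρ.2 (τ.1 ω) ω

/-- `u(ρ,τ) = E[U(ρ[τ], τ[ρ])]`. -/
def payoff (μ : Measure Ω) (U : ℝ≥0∞ → ℝ≥0∞ → Ω → ℝ)
    (ρ τ : (Ω → ℝ≥0∞) × (ℝ≥0∞ → Ω → ℝ≥0∞)) : ℝ :=
  ∫ ω, U (play ρ τ ω) (play τ ρ ω) ω ∂μ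

/-- `u_σ(ρ,τ) = E[U(ρ[τ], τ[ρ]) | m]`. -/
def condPayoff (μ : Measure Ω) (m : MeasurableSpace Ω) (U : ℝ≥0∞ → ℝ≥0∞ → Ω → ℝ)
    (ρ τ : (Ω → ℝ≥0∞) × (ℝ≥0∞ → Ω → ℝ≥0∞)) : Ω → ℝ :=
  μ[fun ω => U (play ρ τ ω) (play τ ρ ω) ω | m]

/-- The grid point `n·h ∈ [0,∞]`. -/
def grid (h : ℝ) (n : ℕ) : ℝ≥0∞ := ENNReal.ofReal (n * h)

/-- `⌊t/h⌋ + 1`. -/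
def gridIdx (h : ℝ) (t : ℝ≥0∞) : ℕ := ⌊t.toReal / h⌋₊ + 1

/-- `ρ_h(t) := ρ̄((⌊t/h⌋+1)h)` for finite `t`, and `ρ_h(∞) := ∞`. -/
def gridStrat (h : ℝ) (bar : ℕ → Ω → ℝ≥0∞) : ℝ≥0∞ → Ω → ℝ≥0∞ := fun t ω =>
  if t = ∞ then ∞ else bar (gridIdx h t) ω

/-- Evaluation `φ(σ) : ω ↦ φ(σ(ω), ω)` of a time-indexed family along a random time. -/
def evalAt (φ : ℝ≥0∞ → Ω → ℝ≥0∞) (σ : Ω → ℝ≥0∞) : Ω → ℝ≥0∞ := fun ω => φ (σ ω) ω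

/-- `X_t = ess inf_{σ ∈ 𝒯_t} E[U(t,σ) | 𝓕_t]` (pointwise infimum, which coincides with the
essential one since `Ω` is countable and every point is charged). -/
def X1v (μ : Measure Ω) (𝓕 : Filtration ℝ≥0∞ mΩ) (U : ℝ≥0∞ → ℝ≥0∞ → Ω → ℝ)
    (t : ℝ≥0∞) (ω : Ω) : ℝ :=
  ⨅ σ : STge 𝓕 (fun _ => t), (μ[fun ω' => U t (σ.1 ω') ω' | 𝓕 t]) ω

/-- `Y_t = ess sup_{σ ∈ 𝒯_t} E[U(σ,t) | 𝓕_t]`. -/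
def Y1v (μ : Measure Ω) (𝓕 : Filtration ℝ≥0∞ mΩ) (U : ℝ≥0∞ → ℝ≥0∞ → Ω → ℝ)
    (t : ℝ≥0∞) (ω : Ω) : ℝ :=
  ⨆ σ : STge 𝓕 (fun _ => t), (μ[fun ω' => U (σ.1 ω') t ω' | 𝓕 t]) ω

/-- Player 2: `X²_t = ess sup_{σ ∈ 𝒯_t} E[U²(t,σ) | 𝓕_t]`. -/
def X2v (μ : Measure Ω) (𝓕 : Filtration ℝ≥0∞ mΩ) (U : ℝ≥0∞ → ℝ≥0∞ → Ω → ℝ)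
    (t : ℝ≥0∞) (ω : Ω) : ℝ :=
  ⨆ σ : STge 𝓕 (fun _ => t), (μ[fun ω' => U t (σ.1 ω') ω' | 𝓕 t]) ω

/-- Player 2: `Y²_t = ess inf_{σ ∈ 𝒯_t} E[U²(σ,t) | 𝓕_t]`. -/
def Y2v (μ : Measure Ω) (𝓕 : Filtration ℝ≥0∞ mΩ) (U : ℝ≥0∞ → ℝ≥0∞ → Ω → ℝ)
    (t : ℝ≥0∞) (ω : Ω) : ℝ :=
  ⨅ σ : STge 𝓕 (fun _ => t), (μ[fun ω' => U (σ.1 ω') t ω' | 𝓕 t]) ω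

/-- `Z_t = U(t,t)`. -/
def Zv (U : ℝ≥0∞ → ℝ≥0∞ → Ω → ℝ) : ℝ≥0∞ → Ω → ℝ := fun t ω => U t t ω

/-- `X_{ρ₀} 1_{ρ₀ < τ₀} + Y_{τ₀} 1_{ρ₀ > τ₀} + Z_{ρ₀} 1_{ρ₀ = τ₀}`. -/
def dynkinKernel (X Y Z : ℝ≥0∞ → Ω → ℝ) (ρ₀ τ₀ : Ω → ℝ≥0∞) (ω : Ω) : ℝ :=
  if ρ₀ ω < τ₀ ω then X (ρ₀ ω) ω else if τ₀ ω < ρ₀ ω then Y (τ₀ ω) ω else Z (ρ₀ ω) ω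

/-- The Dynkin-game payoff `V(ρ₀,τ₀)`. -/
def dynkinV (μ : Measure Ω) (X Y Z : ℝ≥0∞ → Ω → ℝ) (ρ₀ τ₀ : Ω → ℝ≥0∞) : ℝ :=
  ∫ ω, dynkinKernel X Y Z ρ₀ τ₀ ω ∂μ

/-- The conditional Dynkin-game payoff. -/
def condDynkin (μ : Measure Ω) (m : MeasurableSpace Ω) (X Y Z : ℝ≥0∞ → Ω → ℝ)
    (ρ₀ τ₀ : Ω → ℝ≥0∞) : Ω → ℝ :=
  μ[fun ω => dynkinKernel X Y Z ρ₀ τ₀ ω | m]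

/-- `v_t¹`, the (sup-inf) value of the conditional Dynkin game `G_t¹` with payoffs
`(X¹, Y¹, Z¹)` built from `U¹`. -/
def v1v (μ : Measure Ω) (𝓕 : Filtration ℝ≥0∞ mΩ) (U : ℝ≥0∞ → ℝ≥0∞ → Ω → ℝ)
    (t : ℝ≥0∞) (ω : Ω) : ℝ :=
  ⨆ ρ₀ : STge 𝓕 (fun _ => t), ⨅ τ₀ : STge 𝓕 (fun _ => t),
    condDynkin μ (𝓕 t) (X1v μ 𝓕 U) (Y1v μ 𝓕 U) (Zv U) ρ₀.1 τ₀.1 ω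

/-- `v_t²`, the (inf-sup) value of the conditional Dynkin game `G_t²` with payoffs
`(X², Y², Z²)` built from `U²`. -/
def v2v (μ : Measure Ω) (𝓕 : Filtration ℝ≥0∞ mΩ) (U : ℝ≥0∞ → ℝ≥0∞ → Ω → ℝ)
    (t : ℝ≥0∞) (ω : Ω) : ℝ :=
  ⨅ ρ₀ : STge 𝓕 (fun _ => t), ⨆ τ₀ : STge 𝓕 (fun _ => t),
    condDynkin μ (𝓕 t) (X2v μ 𝓕 U) (Y2v μ 𝓕 U) (Zv U) ρ₀.1 τ₀.1 ω

/-- `W_t¹ = E[U¹(t, τ_h²(t)) | 𝓕_t]`. -/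
def W1v (μ : Measure Ω) (𝓕 : Filtration ℝ≥0∞ mΩ) (U : ℝ≥0∞ → ℝ≥0∞ → Ω → ℝ)
    (h : ℝ) (bar : ℕ → Ω → ℝ≥0∞) (t : ℝ≥0∞) (ω : Ω) : ℝ :=
  (μ[fun ω' => U t (gridStrat h bar t ω') ω' | 𝓕 t]) ω

/-- `W_t² = E[U²(ρ_h¹(t), t) | 𝓕_t]`. -/
def W2v (μ : Measure Ω) (𝓕 : Filtration ℝ≥0∞ mΩ) (U : ℝ≥0∞ → ℝ≥0∞ → Ω → ℝ)
    (h : ℝ) (bar : ℕ → Ω → ℝ≥0∞) (t : ℝ≥0∞) (ω : Ω) : ℝ :=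
  (μ[fun ω' => U (gridStrat h bar t ω') t ω' | 𝓕 t]) ω

/-- `μ₁ = inf {t ≥ 0 : v_t¹ ≤ W_t¹ + ε}`. -/
def mu1T (μ : Measure Ω) (𝓕 : Filtration ℝ≥0∞ mΩ) (U : ℝ≥0∞ → ℝ≥0∞ → Ω → ℝ)
    (h ε : ℝ) (bar : ℕ → Ω → ℝ≥0∞) : Ω → ℝ≥0∞ := fun ω =>
  sInf {t | v1v μ 𝓕 U t ω ≤ W1v μ 𝓕 U h bar t ω + ε}

/-- `μ₂ = inf {t ≥ 0 : v_t² ≤ W_t² + ε}`. -/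
def mu2T (μ : Measure Ω) (𝓕 : Filtration ℝ≥0∞ mΩ) (U : ℝ≥0∞ → ℝ≥0∞ → Ω → ℝ)
    (h ε : ℝ) (bar : ℕ → Ω → ℝ≥0∞) : Ω → ℝ≥0∞ := fun ω =>
  sInf {t | v2v μ 𝓕 U t ω ≤ W2v μ 𝓕 U h bar t ω + ε}

/-- `ρ̄(nh)` is a family of `ε`-optimizers for `Y¹_{nh}`:
`E[U(ρ̄(nh), nh) | 𝓕_{nh}] ≥ Y_{nh} − ε`. -/
def IsOptRho1 (μ : Measure Ω) (𝓕 : Filtration ℝ≥0∞ mΩ) (U : ℝ≥0∞ → ℝ≥0∞ → Ω → ℝ)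
    (ε h : ℝ) (bar : ℕ → Ω → ℝ≥0∞) : Prop :=
  ∀ n : ℕ, bar n ∈ STge 𝓕 (fun _ => grid h n) ∧
    ∀ᵐ ω ∂μ, Y1v μ 𝓕 U (grid h n) ω - ε ≤
      (μ[fun ω' => U (bar n ω') (grid h n) ω' | 𝓕 (grid h n)]) ω

/-- `τ̄(nh)` is a family of `ε`-optimizers for `X¹_{nh}`:
`E[U(nh, τ̄(nh)) | 𝓕_{nh}] ≤ X_{nh} + ε`. -/
def IsOptTau1 (μ : Measure Ω) (𝓕 : Filtration ℝ≥0∞ mΩ) (U : ℝ≥0∞ → ℝ≥0∞ → Ω → ℝ)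
    (ε h : ℝ) (bar : ℕ → Ω → ℝ≥0∞) : Prop :=
  ∀ n : ℕ, bar n ∈ STge 𝓕 (fun _ => grid h n) ∧
    ∀ᵐ ω ∂μ, (μ[fun ω' => U (grid h n) (bar n ω') ω' | 𝓕 (grid h n)]) ω ≤
      X1v μ 𝓕 U (grid h n) ω + ε

/-- `ρ̄²(nh)` is a family of `ε`-optimizers for `Y²_{nh}` (an essential infimum). -/
def IsOptRho2 (μ : Measure Ω) (𝓕 : Filtration ℝ≥0∞ mΩ) (U : ℝ≥0∞ → ℝ≥0∞ → Ω → ℝ)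
    (ε h : ℝ) (bar : ℕ → Ω → ℝ≥0∞) : Prop :=
  ∀ n : ℕ, bar n ∈ STge 𝓕 (fun _ => grid h n) ∧
    ∀ᵐ ω ∂μ, (μ[fun ω' => U (bar n ω') (grid h n) ω' | 𝓕 (grid h n)]) ω ≤
      Y2v μ 𝓕 U (grid h n) ω + ε

/-- `τ̄²(nh)` is a family of `ε`-optimizers for `X²_{nh}` (an essential supremum). -/
def IsOptTau2 (μ : Measure Ω) (𝓕 : Filtration ℝ≥0∞ mΩ) (U : ℝ≥0∞ → ℝ≥0∞ → Ω → ℝ)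
    (ε h : ℝ) (bar : ℕ → Ω → ℝ≥0∞) : Prop :=
  ∀ n : ℕ, bar n ∈ STge 𝓕 (fun _ => grid h n) ∧
    ∀ᵐ ω ∂μ, X2v μ 𝓕 U (grid h n) ω - ε ≤
      (μ[fun ω' => U (grid h n) (bar n ω') ω' | 𝓕 (grid h n)]) ω

/-- The standing assumptions on the filtered probability space: `ℙ` charges every point of the
(countable) `Ω`, the filtration is right continuous (usual conditions; completeness is automatic
since null sets are empty), and `𝓕 = 𝓕_∞ = ⋃_{t<∞} 𝓕_t`. -/
def UsualSetup (μ : Measure Ω) (𝓕 : Filtration ℝ≥0∞ mΩ) : Prop :=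
  (∀ ω : Ω, μ {ω} ≠ 0) ∧
  (∀ t : ℝ≥0∞, (𝓕 t : MeasurableSpace Ω) = ⨅ s ∈ Ioi t, (𝓕 s : MeasurableSpace Ω)) ∧
  ((𝓕 ∞ : MeasurableSpace Ω) = mΩ) ∧
  ((⨆ t ∈ Iio (∞ : ℝ≥0∞), (𝓕 t : MeasurableSpace Ω)) = mΩ)

/-- The standing assumptions on a payoff `U`: boundedness, `𝓕_{s∨t}`-measurability of `U(s,t)`,
and the uniform-continuity modulus `r` (bounded, nondecreasing, `r(0+) = r(0) = 0`).  Note that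
the modulus condition, being imposed on all of `[0,∞]`, encodes that the values at `∞` are the
corresponding limits. -/
def PayoffAssumption (𝓕 : Filtration ℝ≥0∞ mΩ) (U : ℝ≥0∞ → ℝ≥0∞ → Ω → ℝ)
    (r : ℝ≥0∞ → ℝ) : Prop :=
  (∃ M : ℝ, ∀ s t ω, |U s t ω| ≤ M) ∧
  (∀ s t : ℝ≥0∞, Measurable[𝓕 (s ⊔ t)] (U s t)) ∧
  Monotone r ∧ (∀ x, 0 ≤ r x) ∧ (∃ C : ℝ, ∀ x, r x ≤ C) ∧ r 0 = 0 ∧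
  Tendsto r (𝓝[>] (0 : ℝ≥0∞)) (𝓝 (0 : ℝ)) ∧
  (∀ s t s' t' : ℝ≥0∞, ∀ ω, |U s t ω - U s' t' ω| ≤ r (dd s s' + dd t t'))

/-- The values of `U` at `∞` are the limits of the values at finite times. -/
def LimitsAtInfty (U : ℝ≥0∞ → ℝ≥0∞ → Ω → ℝ) : Prop :=
  (∀ s ω, Tendsto (fun b => U s b ω) (𝓝[<] (∞ : ℝ≥0∞)) (𝓝 (U s ∞ ω))) ∧
  (∀ t ω, Tendsto (fun a => U a t ω) (𝓝[<] (∞ : ℝ≥0∞)) (𝓝 (U ∞ t ω))) ∧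
  (∀ ω, Tendsto (fun p : ℝ≥0∞ × ℝ≥0∞ => U p.1 p.2 ω)
    ((𝓝[<] (∞ : ℝ≥0∞)) ×ˢ (𝓝[<] (∞ : ℝ≥0∞))) (𝓝 (U ∞ ∞ ω)))

/-- `ess inf_{σ ∈ 𝒯_v} E[U(s,σ) | 𝓕_v]` for a stopping time `v`. -/
def XatST (μ : Measure Ω) (𝓕 : Filtration ℝ≥0∞ mΩ) (U : ℝ≥0∞ → ℝ≥0∞ → Ω → ℝ)
    {v : Ω → ℝ≥0∞} (hv : IsStoppingTime 𝓕 (fun ω => (v ω : WithTop ℝ≥0∞))) (s : ℝ≥0∞) (ω : Ω) : ℝ :=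
  ⨅ σ : STge 𝓕 v, (μ[fun ω' => U s (σ.1 ω') ω' | hv.measurableSpace]) ω

/-- `X̃_v(s) = ess inf_{σ ∈ 𝒯_v} E[U(s,σ) | 𝓕_v]` for a deterministic time `v`. -/
def Xat (μ : Measure Ω) (𝓕 : Filtration ℝ≥0∞ mΩ) (U : ℝ≥0∞ → ℝ≥0∞ → Ω → ℝ)
    (v s : ℝ≥0∞) (ω : Ω) : ℝ :=
  ⨅ σ : STge 𝓕 (fun _ => v), (μ[fun ω' => U s (σ.1 ω') ω' | 𝓕 v]) ω

/-- `ρ₀* = μ₁ 1_{μ₁ ≤ μ₂} + ρ²_{μ₂+δ} 1_{μ₁ > μ₂}`. -/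
def rhoStar0 (m1 m2 rsad2 : Ω → ℝ≥0∞) : Ω → ℝ≥0∞ := fun ω =>
  if m1 ω ≤ m2 ω then m1 ω else rsad2 ω

/-- `ρ₁*(t) = ρ_h²(t)` if `t ≥ μ₁ ∧ μ₂ + δ` and `μ₁ > μ₂`, else `ρ_h¹(t)`. -/
def rhoStar1 (m1 m2 : Ω → ℝ≥0∞) (δ : ℝ) (φ1 φ2 : ℝ≥0∞ → Ω → ℝ≥0∞) :
    ℝ≥0∞ → Ω → ℝ≥0∞ := fun t ω =>
  if (m1 ω ⊓ m2 ω) + ENNReal.ofReal δ ≤ t ∧ m2 ω < m1 ω then φ2 t ω else φ1 t ω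

/-- `τ₀* = τ¹_{μ₁+δ} 1_{μ₁ ≤ μ₂} + μ₂ 1_{μ₁ > μ₂}`. -/
def tauStar0 (m1 m2 tsad1 : Ω → ℝ≥0∞) : Ω → ℝ≥0∞ := fun ω =>
  if m1 ω ≤ m2 ω then tsad1 ω else m2 ω

/-- `τ₁*(t) = τ_h¹(t)` if `t ≥ μ₁ ∧ μ₂ + δ` and `μ₁ ≤ μ₂`, else `τ_h²(t)`. -/
def tauStar1 (m1 m2 : Ω → ℝ≥0∞) (δ : ℝ) (ψ1 ψ2 : ℝ≥0∞ → Ω → ℝ≥0∞) :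
    ℝ≥0∞ → Ω → ℝ≥0∞ := fun t ω =>
  if (m1 ω ⊓ m2 ω) + ENNReal.ofReal δ ≤ t ∧ m1 ω ≤ m2 ω then ψ1 t ω else ψ2 t ω

/-! ### Auxiliary lemmas -/

section Aux

variable {μ : Measure Ω}

/-- If `μ` charges every point, then almost-everywhere statements hold everywhere. -/
lemma forall_of_ae (hc : ∀ ω : Ω, μ {ω} ≠ 0) {p : Ω → Prop}
    (h : ∀ᵐ ω ∂μ, p ω) : ∀ ω, p ω := by
  intro ω
  by_contra hω
  refine hc ω (le_antisymm ?_ (zero_le))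
  calc μ {ω} ≤ μ {x | ¬ p x} := measure_mono (by simpa [Set.singleton_subset_iff] using hω)
    _ = 0 := ae_iff.mp h

lemma forall_of_ae_restrict (hc : ∀ ω : Ω, μ {ω} ≠ 0) {A : Set Ω}
    (hA : MeasurableSet A) {p : Ω → Prop} (h : ∀ᵐ ω ∂μ.restrict A, p ω) :
    ∀ ω ∈ A, p ω := by
  intro ω hω
  by_contra hpω
  refine hc ω (le_antisymm ?_ (zero_le))
  have h0 : μ ({x | ¬ p x} ∩ A) = 0 := by
    rw [← Measure.restrict_apply' hA]; exact ae_iff.mp h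
  calc μ {ω} ≤ μ ({x | ¬ p x} ∩ A) :=
        measure_mono (by simp [Set.singleton_subset_iff, hω, hpω])
    _ = 0 := h0

/-- Two points are `m`-equivalent if no `m`-measurable set separates them. -/
def MRel (m : MeasurableSpace Ω) (ω ω' : Ω) : Prop :=
  ∀ s : Set Ω, MeasurableSet[m] s → (ω ∈ s ↔ ω' ∈ s)

lemma eq_of_mrel {m : MeasurableSpace Ω} {β : Type*} [MeasurableSpace β]
    [MeasurableSingletonClass β] {f : Ω → β} (hf : Measurable[m] f) {ω ω' : Ω}
    (h : MRel m ω ω') : f ω = f ω' := by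
  have h1 := h (f ⁻¹' {f ω}) (hf (measurableSet_singleton _))
  have h2 : f ω' ∈ ({f ω} : Set β) := h1.mp rfl
  simpa using h2.symm

/-- On a countable space, any function respecting the `m`-equivalence is `m`-measurable. -/
lemma measurable_of_mrel [Countable Ω] {m : MeasurableSpace Ω} {β : Type*} [MeasurableSpace β]
    {f : Ω → β} (h : ∀ ω ω', MRel m ω ω' → f ω = f ω') : Measurable[m] f := by
  classical
  have hatom : ∀ ω : Ω, MeasurableSet[m] {ω' | MRel m ω ω'} := by
    intro ω
    have hsep : ∀ ω' : Ω, ¬ MRel m ω ω' → ∃ s : Set Ω,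
        MeasurableSet[m] s ∧ ω ∈ s ∧ ω' ∉ s := by
      intro ω' hω'
      simp only [MRel, not_forall] at hω'
      obtain ⟨s, hs, hiff⟩ := hω'
      by_cases hmem : ω ∈ s
      · exact ⟨s, hs, hmem, fun hx => hiff ⟨fun _ => hx, fun _ => hmem⟩⟩
      · have hx : ω' ∈ s := by
          by_contra hx
          exact hiff ⟨fun h' => absurd h' hmem, fun h' => absurd h' hx⟩
        exact ⟨sᶜ, hs.compl, hmem, fun hcon => hcon hx⟩
    choose S hSm hSω hSω' using hsep
    have hA : {ω' | MRel m ω ω'} = ⋂ (x : {x : Ω // ¬ MRel m ω x}), S x.1 x.2 := by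
      ext ω''
      simp only [Set.mem_setOf_eq, Set.mem_iInter]
      constructor
      · intro hrel x
        exact (hrel _ (hSm x.1 x.2)).mp (hSω x.1 x.2)
      · intro hmem
        by_contra hnot
        exact hSω' ω'' hnot (hmem ⟨ω'', hnot⟩)
    rw [hA]
    exact MeasurableSet.iInter fun x => hSm x.1 x.2
  intro t _
  have hU : f ⁻¹' t = ⋃ (x : (f ⁻¹' t : Set Ω)), {ω' | MRel m x.1 ω'} := by
    ext ω'
    simp only [Set.mem_iUnion]
    constructor
    · intro hω'
      exact ⟨⟨ω', hω'⟩, fun s _ => Iff.rfl⟩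
    · rintro ⟨x, hx⟩
      have := h x.1 ω' hx
      simp only [Set.mem_preimage] at x ⊢
      rw [← this]
      exact x.2
  rw [hU]
  exact MeasurableSet.iUnion fun x => hatom x.1

lemma measurable_of_stoppingTime {𝓕 : Filtration ℝ≥0∞ mΩ} {τ : Ω → ℝ≥0∞}
    (hτ : IsStoppingTime 𝓕 (fun ω => (τ ω : WithTop ℝ≥0∞))) : Measurable τ :=
  measurable_of_Iic fun x => 𝓕.le x _ (by
    have := hτ x; simp only [WithTop.coe_le_coe] at this; exact this)

lemma measurable_U_comp [Countable Ω] {U : ℝ≥0∞ → ℝ≥0∞ → Ω → ℝ}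
    (hU : ∀ s t : ℝ≥0∞, Measurable (U s t)) {a b : Ω → ℝ≥0∞}
    (ha : Measurable a) (hb : Measurable b) :
    Measurable fun ω => U (a ω) (b ω) ω :=
  measurable_of_mrel fun ω ω' h => by
    rw [eq_of_mrel ha h, eq_of_mrel hb h]
    exact eq_of_mrel (hU _ _) h

lemma bddBelow_range_of_abs_le {ι : Type*} {f : ι → ℝ} {M : ℝ} (h : ∀ i, |f i| ≤ M) :
    BddBelow (Set.range f) :=
  ⟨-M, by rintro x ⟨i, rfl⟩; exact (abs_le.mp (h i)).1⟩

lemma bddAbove_range_of_abs_le {ι : Type*} {f : ι → ℝ} {M : ℝ} (h : ∀ i, |f i| ≤ M) :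
    BddAbove (Set.range f) :=
  ⟨M, by rintro x ⟨i, rfl⟩; exact (abs_le.mp (h i)).2⟩

lemma integrable_of_bdd [IsFiniteMeasure μ] {f : Ω → ℝ} {M : ℝ}
    (hf : Measurable f) (hb : ∀ ω, |f ω| ≤ M) : Integrable f μ :=
  (integrable_const M).mono' hf.aestronglyMeasurable
    (ae_of_all _ (by simpa [Real.norm_eq_abs] using hb))

lemma condexp_abs_le {α : Type*} {m m0 : MeasurableSpace α} {μ : Measure α}
    [IsProbabilityMeasure μ] (hc : ∀ a : α, μ {a} ≠ 0)
    (hm : m ≤ m0) {f : α → ℝ} {M : ℝ} (hfi : Integrable f μ)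
    (hb : ∀ a, |f a| ≤ M) : ∀ a, |(μ[f|m]) a| ≤ M := by
  have h1 : μ[f|m] ≤ᵐ[μ] μ[fun _ => M|m] :=
    condExp_mono hfi (integrable_const M) (ae_of_all _ fun a => (abs_le.mp (hb a)).2)
  have h2 : μ[fun _ => -M|m] ≤ᵐ[μ] μ[f|m] :=
    condExp_mono (integrable_const _) hfi (ae_of_all _ fun a => (abs_le.mp (hb a)).1)
  rw [condExp_const hm] at h1 h2
  have h3 := forall_of_ae hc (h1.and h2)
  intro a
  exact abs_le.mpr ⟨(h3 a).2, (h3 a).1⟩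

lemma ce_mono {α : Type*} {m m0 : MeasurableSpace α} {μ : Measure α}
    (hc : ∀ a : α, μ {a} ≠ 0) {f g : α → ℝ}
    (hfi : Integrable f μ) (hgi : Integrable g μ) (hfg : ∀ a, f a ≤ g a) :
    ∀ a, (μ[f|m]) a ≤ (μ[g|m]) a :=
  forall_of_ae hc (condExp_mono hfi hgi (ae_of_all _ hfg))

lemma ce_le_add_const {α : Type*} {m m0 : MeasurableSpace α} {μ : Measure α}
    [IsProbabilityMeasure μ] (hc : ∀ a : α, μ {a} ≠ 0)
    (hm : m ≤ m0) {f g : α → ℝ} {c : ℝ}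
    (hfi : Integrable f μ) (hgi : Integrable g μ) (h : ∀ a, f a ≤ g a + c) :
    ∀ a, (μ[f|m]) a ≤ (μ[g|m]) a + c := by
  have h1 : ∀ a, (μ[f|m]) a ≤ (μ[fun a => g a + c|m]) a :=
    ce_mono hc hfi (hgi.add (integrable_const c)) h
  have h2 : μ[fun a => g a + c|m] =ᵐ[μ] fun a => (μ[g|m]) a + c := by
    calc μ[fun a => g a + c|m] = μ[g + fun _ => c|m] := rfl
      _ =ᵐ[μ] μ[g|m] + μ[fun _ => c|m] := condExp_add hgi (integrable_const c) m
      _ = fun a => (μ[g|m]) a + c := by rw [condExp_const hm]; rfl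
  have h2' := forall_of_ae hc h2
  intro a
  exact (h1 a).trans (le_of_eq (h2' a))

lemma ce_tower {α : Type*} {m₁ m₂ m0 : MeasurableSpace α} {μ : Measure α}
    [IsProbabilityMeasure μ] (hc : ∀ a : α, μ {a} ≠ 0)
    (h12 : m₁ ≤ m₂) (hm₂ : m₂ ≤ m0) (f : α → ℝ) :
    ∀ a, (μ[μ[f|m₂]|m₁]) a = (μ[f|m₁]) a :=
  forall_of_ae hc (condExp_condExp_of_le h12 hm₂)

lemma ce_congr_on {α : Type*} {m m0 : MeasurableSpace α} {μ : Measure α}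
    (hc : ∀ a : α, μ {a} ≠ 0) {A : Set α}
    (hA : MeasurableSet[m] A) {f g : α → ℝ}
    (hfi : Integrable f μ) (hgi : Integrable g μ) (hfg : ∀ a ∈ A, f a = g a) :
    ∀ a ∈ A, (μ[f|m]) a = (μ[g|m]) a := by
  have hind : A.indicator f = A.indicator g := by
    funext a
    by_cases ha : a ∈ A
    · simp [Set.indicator_of_mem ha, hfg a ha]
    · simp [Set.indicator_of_notMem ha]
  have h1 := condExp_indicator hfi hA
  have h2 := condExp_indicator hgi hA
  rw [hind] at h1
  have h3 := forall_of_ae hc (h1.symm.trans h2)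
  intro a ha
  have h4 := h3 a
  simpa [Set.indicator_of_mem ha] using h4

lemma dd_self (a : ℝ≥0∞) : dd a a = 0 := by simp [dd]

lemma dd_comm (a b : ℝ≥0∞) : dd a b = dd b a := add_comm _ _

lemma dd_le_of_le {a b c : ℝ≥0∞} (hab : a ≤ b) (h : b ≤ a + c) : dd a b ≤ c := by
  unfold dd
  rw [tsub_eq_zero_of_le hab, zero_add]
  exact tsub_le_iff_right.mpr (by rw [add_comm]; exact h)

lemma dd_sup_le {a g t : ℝ≥0∞} (h : t ≤ a) : dd a (a ⊔ g) ≤ g - t := by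
  unfold dd
  rw [tsub_eq_zero_of_le le_sup_left, zero_add]
  rcases le_total a g with hag | hag
  · rw [sup_eq_right.mpr hag]
    exact tsub_le_tsub_left h g
  · rw [sup_eq_left.mpr hag]
    simp

lemma le_grid {h : ℝ} (hh : 0 < h) {t : ℝ≥0∞} (ht : t ≠ ∞) :
    t ≤ grid h (gridIdx h t) := by
  conv_lhs => rw [← ENNReal.ofReal_toReal ht]
  refine ENNReal.ofReal_le_ofReal ?_
  have hlt : t.toReal / h < (⌊t.toReal / h⌋₊ : ℝ) + 1 := Nat.lt_floor_add_one _
  have hcast : ((gridIdx h t : ℕ) : ℝ) = (⌊t.toReal / h⌋₊ : ℝ) + 1 := by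
    unfold gridIdx; push_cast; ring
  have h1 : t.toReal = (t.toReal / h) * h := (div_mul_cancel₀ _ hh.ne').symm
  rw [h1, hcast]
  exact mul_le_mul_of_nonneg_right hlt.le hh.le

lemma grid_le {h : ℝ} (hh : 0 < h) {t : ℝ≥0∞} (ht : t ≠ ∞) :
    grid h (gridIdx h t) ≤ t + ENNReal.ofReal h := by
  have hx : 0 ≤ t.toReal := ENNReal.toReal_nonneg
  have h1 : ((gridIdx h t : ℕ) : ℝ) * h ≤ t.toReal + h := by
    have hfl : (⌊t.toReal / h⌋₊ : ℝ) ≤ t.toReal / h := Nat.floor_le (div_nonneg hx hh.le)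
    have h2 : (⌊t.toReal / h⌋₊ : ℝ) * h ≤ t.toReal := by
      calc (⌊t.toReal / h⌋₊ : ℝ) * h ≤ (t.toReal / h) * h :=
            mul_le_mul_of_nonneg_right hfl hh.le
        _ = t.toReal := div_mul_cancel₀ _ hh.ne'
    have hcast : ((gridIdx h t : ℕ) : ℝ) = (⌊t.toReal / h⌋₊ : ℝ) + 1 := by
      unfold gridIdx; push_cast; ring
    rw [hcast]
    linarith
  calc grid h (gridIdx h t) = ENNReal.ofReal (((gridIdx h t : ℕ) : ℝ) * h) := rfl
    _ ≤ ENNReal.ofReal (t.toReal + h) := ENNReal.ofReal_le_ofReal h1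
    _ = ENNReal.ofReal t.toReal + ENNReal.ofReal h := ENNReal.ofReal_add hx hh.le
    _ = t + ENNReal.ofReal h := by rw [ENNReal.ofReal_toReal ht]

end Aux

section MainAux

variable [Countable Ω]

/-- The key pointwise estimate for the `X`/`τ̄` side. -/
private lemma main_aux (μ : Measure Ω) [IsProbabilityMeasure μ]
    (𝓕 : Filtration ℝ≥0∞ mΩ) (hc : ∀ ω : Ω, μ {ω} ≠ 0)
    (hFinfty : (𝓕 ∞ : MeasurableSpace Ω) = mΩ)
    (U : ℝ≥0∞ → ℝ≥0∞ → Ω → ℝ) (r : ℝ≥0∞ → ℝ) (hU : PayoffAssumption 𝓕 U r)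
    (ε : ℝ) (hε : 0 < ε) (h : ℝ) (hh : 0 < h)
    (hr2 : r (ENNReal.ofReal (2 * h)) < ε / 2)
    (τbar : ℕ → Ω → ℝ≥0∞) (hopt : IsOptTau1 μ 𝓕 U ε h τbar)
    (ρ₀ : Ω → ℝ≥0∞) (hρ₀ : IsStoppingTime 𝓕 (fun ω => (ρ₀ ω : WithTop ℝ≥0∞))) :
    ∀ ω₀, (μ[fun ω' => U (ρ₀ ω') (evalAt (gridStrat h τbar) ρ₀ ω') ω' |
      hρ₀.measurableSpace]) ω₀ - 2*ε < X1v μ 𝓕 U (ρ₀ ω₀) ω₀ := by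
  obtain ⟨⟨M, hM⟩, hU2, hrmono, hrnn, -, hr0, -, hmod⟩ := hU
  have hUm : ∀ s t : ℝ≥0∞, Measurable (U s t) := fun s t => ((hU2 s t).le (𝓕.le _))
  have hρm : Measurable ρ₀ := measurable_of_stoppingTime hρ₀
  have hstm : ∀ n, Measurable (τbar n) := fun n => measurable_of_stoppingTime ((hopt n).1).1
  have hInt : ∀ {f : Ω → ℝ}, Measurable f → (∀ ω, |f ω| ≤ M) → Integrable f μ :=
    fun hf hb => integrable_of_bdd hf hb
  have key : ∀ (a b a' b' : ℝ≥0∞) (ω : Ω), dd a a' + dd b b' ≤ ENNReal.ofReal (2*h) →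
      U a b ω ≤ U a' b' ω + r (ENNReal.ofReal (2*h)) := by
    intro a b a' b' ω hle
    have h1 := abs_le.mp (hmod a b a' b' ω)
    have h2 : r (dd a a' + dd b b') ≤ r (ENNReal.ofReal (2*h)) := hrmono hle
    linarith [h1.1, h1.2]
  have hr2nn : 0 ≤ r (ENNReal.ofReal (2*h)) := hrnn _
  intro ω₀
  set t := ρ₀ ω₀ with htdef
  set A : Set Ω := {ω | ρ₀ ω = t} with hAdef
  have hmem : ω₀ ∈ A := htdef.symm
  have hmle : hρ₀.measurableSpace ≤ mΩ :=
    hρ₀.measurableSpace_le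
  have hA_m : MeasurableSet[hρ₀.measurableSpace] A :=
    by
      have := hρ₀.measurableSet_eq_of_countable_range' (Set.countable_range _) t
      simp only [WithTop.coe_eq_coe] at this; exact this
  have hA : MeasurableSet A := hmle _ hA_m
  set F : Ω → ℝ := fun ω' => U (ρ₀ ω') (evalAt (gridStrat h τbar) ρ₀ ω') ω' with hFdef
  have hFm : Measurable F := by
    refine measurable_U_comp hUm hρm ?_
    refine measurable_of_mrel fun ω ω' hrel => ?_
    show gridStrat h τbar (ρ₀ ω) ω = gridStrat h τbar (ρ₀ ω') ω'
    rw [eq_of_mrel hρm hrel]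
    by_cases h1 : ρ₀ ω' = ∞
    · simp [gridStrat, h1]
    · simp only [gridStrat, h1, if_false]
      exact eq_of_mrel (hstm _) hrel
  have hFint : Integrable F μ := hInt hFm (fun ω => hM _ _ _)
  by_cases htop : t = ∞
  · -- `t = ∞`
    set Fl : Ω → ℝ := fun ω' => U ∞ ∞ ω' with hFl
    have hFlm : Measurable Fl := hUm ∞ ∞
    have hFlint : Integrable Fl μ := hInt hFlm (fun ω => hM _ _ _)
    have hFeq : ∀ ω ∈ A, F ω = Fl ω := by
      intro ω hω
      have hωt : ρ₀ ω = t := hω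
      simp [hFdef, hFl, evalAt, hωt, htop, gridStrat]
    have loc1 := ce_congr_on hc hA_m hFint hFlint hFeq
    have hAeq : {x | ((ρ₀ x : ℝ≥0∞) : WithTop ℝ≥0∞) = (t : WithTop ℝ≥0∞)} = A := by
      ext x; simp [hAdef]
    have loc2' := condExp_stopping_time_ae_eq_restrict_eq_of_countable_range (μ := μ) (f := Fl) hρ₀
        (Set.countable_range _) t
    rw [hAeq] at loc2'
    have loc2 := forall_of_ae_restrict hc hA loc2'
    have hsm : StronglyMeasurable[(𝓕 ∞ : MeasurableSpace Ω)] Fl := by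
      rw [hFinfty]; exact hFlm.stronglyMeasurable
    have hce : μ[Fl|𝓕 ∞] = Fl := condExp_of_stronglyMeasurable (𝓕.le ∞) hsm hFlint
    haveI hne : Nonempty ↥(STge 𝓕 (fun _ : Ω => (∞ : ℝ≥0∞))) :=
      ⟨⟨fun _ => ∞, isStoppingTime_const 𝓕 ∞, fun _ => le_rfl⟩⟩
    have hX : X1v μ 𝓕 U ∞ ω₀ = Fl ω₀ := by
      unfold X1v
      have heq : ∀ σ : ↥(STge 𝓕 (fun _ : Ω => (∞ : ℝ≥0∞))),
          (μ[fun ω' => U ∞ (σ.1 ω') ω'|𝓕 ∞]) ω₀ = Fl ω₀ := by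
        intro σ
        have hσeq : (fun ω' => U ∞ (σ.1 ω') ω') = Fl :=
          funext fun ω' => by rw [top_le_iff.mp (σ.2.2 ω')]
        rw [hσeq, hce]
      rw [iInf_congr heq]
      exact ciInf_const
    have e1 : (μ[F|hρ₀.measurableSpace]) ω₀ = Fl ω₀ := by
      rw [loc1 ω₀ hmem, loc2 ω₀ hmem, htop, hce]
    have e2 : X1v μ 𝓕 U t ω₀ = Fl ω₀ := by rw [htop]; exact hX
    rw [e1, e2]
    linarith
  · -- `t < ∞`
    set n := gridIdx h t with hndef
    set g := grid h n with hgdef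
    have htg : t ≤ g := le_grid hh htop
    have hgle : g ≤ t + ENNReal.ofReal h := grid_le hh htop
    have hddtg : dd t g ≤ ENNReal.ofReal h := dd_le_of_le htg hgle
    have hgt_le : g - t ≤ ENNReal.ofReal h :=
      tsub_le_iff_right.mpr (by rw [add_comm]; exact hgle)
    have hhh : ENNReal.ofReal h + ENNReal.ofReal h = ENNReal.ofReal (2*h) := by
      rw [← ENNReal.ofReal_add hh.le hh.le, two_mul]
    set τs := τbar n with hτsdef
    have hτs_st : IsStoppingTime 𝓕 (fun ω => (τs ω : WithTop ℝ≥0∞)) := ((hopt n).1).1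
    set Fl : Ω → ℝ := fun ω' => U t (τs ω') ω' with hFl
    set G : Ω → ℝ := fun ω' => U g (τs ω') ω' with hG
    have hFlm : Measurable Fl := measurable_U_comp hUm measurable_const (hstm n)
    have hGm : Measurable G := measurable_U_comp hUm measurable_const (hstm n)
    have hFlint : Integrable Fl μ := hInt hFlm fun ω => hM _ _ _
    have hGint : Integrable G μ := hInt hGm fun ω => hM _ _ _
    have hFeq : ∀ ω ∈ A, F ω = Fl ω := by
      intro ω hω
      have hωt : ρ₀ ω = t := hω
      simp only [hFdef, hFl, evalAt, hωt, gridStrat, if_neg htop]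
      rfl
    have loc1 := ce_congr_on hc hA_m hFint hFlint hFeq
    have hAeq : {x | ((ρ₀ x : ℝ≥0∞) : WithTop ℝ≥0∞) = (t : WithTop ℝ≥0∞)} = A := by
      ext x; simp [hAdef]
    have loc2' := condExp_stopping_time_ae_eq_restrict_eq_of_countable_range (μ := μ) (f := Fl) hρ₀
        (Set.countable_range _) t
    rw [hAeq] at loc2'
    have loc2 := forall_of_ae_restrict hc hA loc2'
    haveI hne : Nonempty ↥(STge 𝓕 (fun _ : Ω => g)) :=
      ⟨⟨fun _ => g, isStoppingTime_const 𝓕 g, fun _ => le_rfl⟩⟩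
    haveI hne_t : Nonempty ↥(STge 𝓕 (fun _ : Ω => t)) :=
      ⟨⟨fun _ => t, isStoppingTime_const 𝓕 t, fun _ => le_rfl⟩⟩
    have htermbd : ∀ (ω : Ω) (σ : ↥(STge 𝓕 (fun _ : Ω => g))),
        |(μ[fun ω' => U g (σ.1 ω') ω'|𝓕 g]) ω| ≤ M := fun ω σ =>
      condexp_abs_le hc (𝓕.le g)
        (hInt (measurable_U_comp hUm measurable_const (measurable_of_stoppingTime σ.2.1))
          fun _ => hM _ _ _) (fun _ => hM _ _ _) ω
    have hXm : Measurable (X1v μ 𝓕 U g) := by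
      refine measurable_of_mrel fun ω ω' hrel => ?_
      unfold X1v
      exact iInf_congr fun σ =>
        eq_of_mrel ((stronglyMeasurable_condExp.measurable).le (𝓕.le g)) hrel
    have hXb : ∀ ω, |X1v μ 𝓕 U g ω| ≤ M := by
      intro ω
      refine abs_le.mpr ⟨le_ciInf fun σ => (abs_le.mp (htermbd ω σ)).1, ?_⟩
      exact le_trans (ciInf_le (bddBelow_range_of_abs_le (htermbd ω)) hne.some)
        (abs_le.mp (htermbd ω hne.some)).2
    have hXint : Integrable (X1v μ 𝓕 U g) μ := hInt hXm hXb
    have hFG : ∀ ω, Fl ω ≤ G ω + r (ENNReal.ofReal (2*h)) := by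
      intro ω
      refine key t (τs ω) g (τs ω) ω ?_
      rw [dd_self, add_zero]
      exact hddtg.trans (le_trans le_self_add hhh.le)
    have c1 : ∀ ω, (μ[Fl|𝓕 t]) ω ≤ (μ[G|𝓕 t]) ω + r (ENNReal.ofReal (2*h)) :=
      ce_le_add_const hc (𝓕.le t) hFlint hGint hFG
    have c2 : ∀ ω, (μ[G|𝓕 t]) ω = (μ[μ[G|𝓕 g]|𝓕 t]) ω := fun ω =>
      (ce_tower hc (𝓕.mono htg) (𝓕.le g) G ω).symm
    have c3 : ∀ ω, (μ[G|𝓕 g]) ω ≤ X1v μ 𝓕 U g ω + ε := forall_of_ae hc (hopt n).2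
    have c4 : ∀ ω, (μ[μ[G|𝓕 g]|𝓕 t]) ω ≤ (μ[X1v μ 𝓕 U g|𝓕 t]) ω + ε :=
      ce_le_add_const hc (𝓕.le t) integrable_condExp hXint c3
    have c5 : ∀ ω, (μ[X1v μ 𝓕 U g|𝓕 t]) ω ≤ X1v μ 𝓕 U t ω + r (ENNReal.ofReal (2*h)) := by
      intro ω
      have hstep : ∀ σ : ↥(STge 𝓕 (fun _ : Ω => t)),
          (μ[X1v μ 𝓕 U g|𝓕 t]) ω - r (ENNReal.ofReal (2*h)) ≤
            (μ[fun ω' => U t (σ.1 ω') ω'|𝓕 t]) ω := by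
        intro σ
        set σ' : Ω → ℝ≥0∞ := fun ω' => σ.1 ω' ⊔ g with hσ'def
        have hσ'_st : IsStoppingTime 𝓕 (fun ω => (σ' ω : WithTop ℝ≥0∞)) := by
          convert σ.2.1.max_const g using 2 with ω
          simp [hσ'def]
        have hσ'mem : σ' ∈ STge 𝓕 (fun _ : Ω => g) := ⟨hσ'_st, fun ω' => le_sup_right⟩
        have hσint : Integrable (fun ω' => U t (σ.1 ω') ω') μ :=
          hInt (measurable_U_comp hUm measurable_const (measurable_of_stoppingTime σ.2.1))
            fun _ => hM _ _ _
        have hσ'int : Integrable (fun ω' => U g (σ' ω') ω') μ :=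
          hInt (measurable_U_comp hUm measurable_const (measurable_of_stoppingTime hσ'_st))
            fun _ => hM _ _ _
        have p1 : ∀ ω', X1v μ 𝓕 U g ω' ≤ (μ[fun w => U g (σ' w) w|𝓕 g]) ω' := by
          intro ω'
          exact ciInf_le (bddBelow_range_of_abs_le (htermbd ω')) ⟨σ', hσ'mem⟩
        have p2 : ∀ ω', U g (σ' ω') ω' ≤ U t (σ.1 ω') ω' + r (ENNReal.ofReal (2*h)) := by
          intro ω'
          refine key g (σ' ω') t (σ.1 ω') ω' ?_
          have hd1 : dd g t ≤ ENNReal.ofReal h := by rw [dd_comm]; exact hddtg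
          have hd2 : dd (σ' ω') (σ.1 ω') ≤ ENNReal.ofReal h := by
            rw [dd_comm]
            exact le_trans (dd_sup_le (σ.2.2 ω')) hgt_le
          calc dd g t + dd (σ' ω') (σ.1 ω')
              ≤ ENNReal.ofReal h + ENNReal.ofReal h := add_le_add hd1 hd2
            _ = ENNReal.ofReal (2*h) := hhh
        have q1 : ∀ w, (μ[X1v μ 𝓕 U g|𝓕 t]) w ≤
            (μ[μ[fun w' => U g (σ' w') w'|𝓕 g]|𝓕 t]) w :=
          ce_mono hc hXint integrable_condExp p1
        have q2 : ∀ w, (μ[μ[fun w' => U g (σ' w') w'|𝓕 g]|𝓕 t]) w =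
            (μ[fun w' => U g (σ' w') w'|𝓕 t]) w :=
          ce_tower hc (𝓕.mono htg) (𝓕.le g) _
        have q3 : ∀ w, (μ[fun w' => U g (σ' w') w'|𝓕 t]) w ≤
            (μ[fun w' => U t (σ.1 w') w'|𝓕 t]) w + r (ENNReal.ofReal (2*h)) :=
          ce_le_add_const hc (𝓕.le t) hσ'int hσint p2
        linarith [q1 ω, q2 ω, q3 ω]
      have hfin : (μ[X1v μ 𝓕 U g|𝓕 t]) ω - r (ENNReal.ofReal (2*h)) ≤ X1v μ 𝓕 U t ω :=
        le_ciInf hstep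
      linarith
    have e1 : (μ[F|hρ₀.measurableSpace]) ω₀ = (μ[Fl|𝓕 t]) ω₀ :=
      (loc1 ω₀ hmem).trans (loc2 ω₀ hmem)
    rw [e1]
    linarith [c1 ω₀, c2 ω₀, c4 ω₀, c5 ω₀]

/-- The key pointwise estimate for the `Y`/`ρ̄` side. -/
private lemma main_aux2 (μ : Measure Ω) [IsProbabilityMeasure μ]
    (𝓕 : Filtration ℝ≥0∞ mΩ) (hc : ∀ ω : Ω, μ {ω} ≠ 0)
    (hFinfty : (𝓕 ∞ : MeasurableSpace Ω) = mΩ)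
    (U : ℝ≥0∞ → ℝ≥0∞ → Ω → ℝ) (r : ℝ≥0∞ → ℝ) (hU : PayoffAssumption 𝓕 U r)
    (ε : ℝ) (hε : 0 < ε) (h : ℝ) (hh : 0 < h)
    (hr2 : r (ENNReal.ofReal (2 * h)) < ε / 2)
    (ρbar : ℕ → Ω → ℝ≥0∞) (hopt : IsOptRho1 μ 𝓕 U ε h ρbar)
    (τ₀ : Ω → ℝ≥0∞) (hτ₀ : IsStoppingTime 𝓕 (fun ω => (τ₀ ω : WithTop ℝ≥0∞))) :
    ∀ ω₀, Y1v μ 𝓕 U (τ₀ ω₀) ω₀ <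
      (μ[fun ω' => U (evalAt (gridStrat h ρbar) τ₀ ω') (τ₀ ω') ω' |
        hτ₀.measurableSpace]) ω₀ + 2*ε := by
  obtain ⟨⟨M, hM⟩, hU2, hrmono, hrnn, -, hr0, -, hmod⟩ := hU
  have hUm : ∀ s t : ℝ≥0∞, Measurable (U s t) := fun s t => ((hU2 s t).le (𝓕.le _))
  have hρm : Measurable τ₀ := measurable_of_stoppingTime hτ₀
  have hstm : ∀ n, Measurable (ρbar n) := fun n => measurable_of_stoppingTime ((hopt n).1).1
  have hInt : ∀ {f : Ω → ℝ}, Measurable f → (∀ ω, |f ω| ≤ M) → Integrable f μ :=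
    fun hf hb => integrable_of_bdd hf hb
  have key : ∀ (a b a' b' : ℝ≥0∞) (ω : Ω), dd a a' + dd b b' ≤ ENNReal.ofReal (2*h) →
      U a b ω ≤ U a' b' ω + r (ENNReal.ofReal (2*h)) := by
    intro a b a' b' ω hle
    have h1 := abs_le.mp (hmod a b a' b' ω)
    have h2 : r (dd a a' + dd b b') ≤ r (ENNReal.ofReal (2*h)) := hrmono hle
    linarith [h1.1, h1.2]
  have hr2nn : 0 ≤ r (ENNReal.ofReal (2*h)) := hrnn _
  intro ω₀
  set t := τ₀ ω₀ with htdef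
  set A : Set Ω := {ω | τ₀ ω = t} with hAdef
  have hmem : ω₀ ∈ A := htdef.symm
  have hmle : hτ₀.measurableSpace ≤ mΩ :=
    hτ₀.measurableSpace_le
  have hA_m : MeasurableSet[hτ₀.measurableSpace] A :=
    by
      have := hτ₀.measurableSet_eq_of_countable_range' (Set.countable_range _) t
      simp only [WithTop.coe_eq_coe] at this; exact this
  have hA : MeasurableSet A := hmle _ hA_m
  set F : Ω → ℝ := fun ω' => U (evalAt (gridStrat h ρbar) τ₀ ω') (τ₀ ω') ω' with hFdef
  have hFm : Measurable F := by
    refine measurable_U_comp hUm ?_ hρm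
    refine measurable_of_mrel fun ω ω' hrel => ?_
    show gridStrat h ρbar (τ₀ ω) ω = gridStrat h ρbar (τ₀ ω') ω'
    rw [eq_of_mrel hρm hrel]
    by_cases h1 : τ₀ ω' = ∞
    · simp [gridStrat, h1]
    · simp only [gridStrat, h1, if_false]
      exact eq_of_mrel (hstm _) hrel
  have hFint : Integrable F μ := hInt hFm (fun ω => hM _ _ _)
  by_cases htop : t = ∞
  · -- `t = ∞`
    set Fl : Ω → ℝ := fun ω' => U ∞ ∞ ω' with hFl
    have hFlm : Measurable Fl := hUm ∞ ∞
    have hFlint : Integrable Fl μ := hInt hFlm (fun ω => hM _ _ _)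
    have hFeq : ∀ ω ∈ A, F ω = Fl ω := by
      intro ω hω
      have hωt : τ₀ ω = t := hω
      simp [hFdef, hFl, evalAt, hωt, htop, gridStrat]
    have loc1 := ce_congr_on hc hA_m hFint hFlint hFeq
    have hAeq : {x | ((τ₀ x : ℝ≥0∞) : WithTop ℝ≥0∞) = (t : WithTop ℝ≥0∞)} = A := by
      ext x; simp [hAdef]
    have loc2' := condExp_stopping_time_ae_eq_restrict_eq_of_countable_range (μ := μ) (f := Fl) hτ₀
        (Set.countable_range _) t
    rw [hAeq] at loc2'
    have loc2 := forall_of_ae_restrict hc hA loc2'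
    have hsm : StronglyMeasurable[(𝓕 ∞ : MeasurableSpace Ω)] Fl := by
      rw [hFinfty]; exact hFlm.stronglyMeasurable
    have hce : μ[Fl|𝓕 ∞] = Fl := condExp_of_stronglyMeasurable (𝓕.le ∞) hsm hFlint
    haveI hne : Nonempty ↥(STge 𝓕 (fun _ : Ω => (∞ : ℝ≥0∞))) :=
      ⟨⟨fun _ => ∞, isStoppingTime_const 𝓕 ∞, fun _ => le_rfl⟩⟩
    have hY : Y1v μ 𝓕 U ∞ ω₀ = Fl ω₀ := by
      unfold Y1v
      have heq : ∀ σ : ↥(STge 𝓕 (fun _ : Ω => (∞ : ℝ≥0∞))),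
          (μ[fun ω' => U (σ.1 ω') ∞ ω'|𝓕 ∞]) ω₀ = Fl ω₀ := by
        intro σ
        have hσeq : (fun ω' => U (σ.1 ω') ∞ ω') = Fl :=
          funext fun ω' => by rw [top_le_iff.mp (σ.2.2 ω')]
        rw [hσeq, hce]
      rw [iSup_congr heq]
      exact ciSup_const
    have e1 : (μ[F|hτ₀.measurableSpace]) ω₀ = Fl ω₀ := by
      rw [loc1 ω₀ hmem, loc2 ω₀ hmem, htop, hce]
    have e2 : Y1v μ 𝓕 U t ω₀ = Fl ω₀ := by rw [htop]; exact hY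
    rw [e1, e2]
    linarith
  · -- `t < ∞`
    set n := gridIdx h t with hndef
    set g := grid h n with hgdef
    have htg : t ≤ g := le_grid hh htop
    have hgle : g ≤ t + ENNReal.ofReal h := grid_le hh htop
    have hddtg : dd t g ≤ ENNReal.ofReal h := dd_le_of_le htg hgle
    have hgt_le : g - t ≤ ENNReal.ofReal h :=
      tsub_le_iff_right.mpr (by rw [add_comm]; exact hgle)
    have hhh : ENNReal.ofReal h + ENNReal.ofReal h = ENNReal.ofReal (2*h) := by
      rw [← ENNReal.ofReal_add hh.le hh.le, two_mul]
    set ρs := ρbar n with hρsdef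
    have hρs_st : IsStoppingTime 𝓕 (fun ω => (ρs ω : WithTop ℝ≥0∞)) := ((hopt n).1).1
    set Fl : Ω → ℝ := fun ω' => U (ρs ω') t ω' with hFl
    set G : Ω → ℝ := fun ω' => U (ρs ω') g ω' with hG
    have hFlm : Measurable Fl := measurable_U_comp hUm (hstm n) measurable_const
    have hGm : Measurable G := measurable_U_comp hUm (hstm n) measurable_const
    have hFlint : Integrable Fl μ := hInt hFlm fun ω => hM _ _ _
    have hGint : Integrable G μ := hInt hGm fun ω => hM _ _ _
    have hFeq : ∀ ω ∈ A, F ω = Fl ω := by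
      intro ω hω
      have hωt : τ₀ ω = t := hω
      simp only [hFdef, hFl, evalAt, hωt, gridStrat, if_neg htop]
      rfl
    have loc1 := ce_congr_on hc hA_m hFint hFlint hFeq
    have hAeq : {x | ((τ₀ x : ℝ≥0∞) : WithTop ℝ≥0∞) = (t : WithTop ℝ≥0∞)} = A := by
      ext x; simp [hAdef]
    have loc2' := condExp_stopping_time_ae_eq_restrict_eq_of_countable_range (μ := μ) (f := Fl) hτ₀
        (Set.countable_range _) t
    rw [hAeq] at loc2'
    have loc2 := forall_of_ae_restrict hc hA loc2'
    haveI hne : Nonempty ↥(STge 𝓕 (fun _ : Ω => g)) :=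
      ⟨⟨fun _ => g, isStoppingTime_const 𝓕 g, fun _ => le_rfl⟩⟩
    haveI hne_t : Nonempty ↥(STge 𝓕 (fun _ : Ω => t)) :=
      ⟨⟨fun _ => t, isStoppingTime_const 𝓕 t, fun _ => le_rfl⟩⟩
    have htermbd : ∀ (ω : Ω) (σ : ↥(STge 𝓕 (fun _ : Ω => g))),
        |(μ[fun ω' => U (σ.1 ω') g ω'|𝓕 g]) ω| ≤ M := fun ω σ =>
      condexp_abs_le hc (𝓕.le g)
        (hInt (measurable_U_comp hUm (measurable_of_stoppingTime σ.2.1) measurable_const)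
          fun _ => hM _ _ _) (fun _ => hM _ _ _) ω
    have hYm : Measurable (Y1v μ 𝓕 U g) := by
      refine measurable_of_mrel fun ω ω' hrel => ?_
      unfold Y1v
      exact iSup_congr fun σ =>
        eq_of_mrel ((stronglyMeasurable_condExp.measurable).le (𝓕.le g)) hrel
    have hYb : ∀ ω, |Y1v μ 𝓕 U g ω| ≤ M := by
      intro ω
      refine abs_le.mpr ⟨?_, ciSup_le fun σ => (abs_le.mp (htermbd ω σ)).2⟩
      exact le_trans (abs_le.mp (htermbd ω hne.some)).1
        (le_ciSup (bddAbove_range_of_abs_le (htermbd ω)) hne.some)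
    have hYint : Integrable (Y1v μ 𝓕 U g) μ := hInt hYm hYb
    have hGF : ∀ ω, G ω ≤ Fl ω + r (ENNReal.ofReal (2*h)) := by
      intro ω
      refine key (ρs ω) g (ρs ω) t ω ?_
      rw [dd_self, zero_add, dd_comm]
      exact hddtg.trans (le_trans le_self_add hhh.le)
    have c1 : ∀ ω, (μ[G|𝓕 t]) ω ≤ (μ[Fl|𝓕 t]) ω + r (ENNReal.ofReal (2*h)) :=
      ce_le_add_const hc (𝓕.le t) hGint hFlint hGF
    have c2 : ∀ ω, (μ[G|𝓕 t]) ω = (μ[μ[G|𝓕 g]|𝓕 t]) ω := fun ω =>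
      (ce_tower hc (𝓕.mono htg) (𝓕.le g) G ω).symm
    have c3 : ∀ ω, Y1v μ 𝓕 U g ω - ε ≤ (μ[G|𝓕 g]) ω := forall_of_ae hc (hopt n).2
    have c4 : ∀ ω, (μ[Y1v μ 𝓕 U g|𝓕 t]) ω ≤ (μ[μ[G|𝓕 g]|𝓕 t]) ω + ε :=
      ce_le_add_const hc (𝓕.le t) hYint integrable_condExp (fun ω => by linarith [c3 ω])
    have c5 : ∀ ω, Y1v μ 𝓕 U t ω ≤ (μ[Y1v μ 𝓕 U g|𝓕 t]) ω + r (ENNReal.ofReal (2*h)) := by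
      intro ω
      refine ciSup_le fun σ => ?_
      set σ' : Ω → ℝ≥0∞ := fun ω' => σ.1 ω' ⊔ g with hσ'def
      have hσ'_st : IsStoppingTime 𝓕 (fun ω => (σ' ω : WithTop ℝ≥0∞)) := by
        convert σ.2.1.max_const g using 2 with ω
        simp [hσ'def]
      have hσ'mem : σ' ∈ STge 𝓕 (fun _ : Ω => g) := ⟨hσ'_st, fun ω' => le_sup_right⟩
      have hσint : Integrable (fun ω' => U (σ.1 ω') t ω') μ :=
        hInt (measurable_U_comp hUm (measurable_of_stoppingTime σ.2.1) measurable_const)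
          fun _ => hM _ _ _
      have hσ'int : Integrable (fun ω' => U (σ' ω') g ω') μ :=
        hInt (measurable_U_comp hUm (measurable_of_stoppingTime hσ'_st) measurable_const)
          fun _ => hM _ _ _
      have p1 : ∀ ω', (μ[fun w => U (σ' w) g w|𝓕 g]) ω' ≤ Y1v μ 𝓕 U g ω' := by
        intro ω'
        exact le_ciSup (bddAbove_range_of_abs_le (htermbd ω')) ⟨σ', hσ'mem⟩
      have p2 : ∀ ω', U (σ.1 ω') t ω' ≤ U (σ' ω') g ω' + r (ENNReal.ofReal (2*h)) := by
        intro ω'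
        refine key (σ.1 ω') t (σ' ω') g ω' ?_
        have hd1 : dd t g ≤ ENNReal.ofReal h := hddtg
        have hd2 : dd (σ.1 ω') (σ' ω') ≤ ENNReal.ofReal h :=
          le_trans (dd_sup_le (σ.2.2 ω')) hgt_le
        calc dd (σ.1 ω') (σ' ω') + dd t g
            ≤ ENNReal.ofReal h + ENNReal.ofReal h := add_le_add hd2 hd1
          _ = ENNReal.ofReal (2*h) := hhh
      have q3 : ∀ w, (μ[fun w' => U (σ.1 w') t w'|𝓕 t]) w ≤
          (μ[fun w' => U (σ' w') g w'|𝓕 t]) w + r (ENNReal.ofReal (2*h)) :=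
        ce_le_add_const hc (𝓕.le t) hσint hσ'int p2
      have q2 : ∀ w, (μ[μ[fun w' => U (σ' w') g w'|𝓕 g]|𝓕 t]) w =
          (μ[fun w' => U (σ' w') g w'|𝓕 t]) w :=
        ce_tower hc (𝓕.mono htg) (𝓕.le g) _
      have q1 : ∀ w, (μ[μ[fun w' => U (σ' w') g w'|𝓕 g]|𝓕 t]) w ≤
          (μ[Y1v μ 𝓕 U g|𝓕 t]) w :=
        ce_mono hc integrable_condExp hYint p1
      linarith [q1 ω, q2 ω, q3 ω]
    have e1 : (μ[F|hτ₀.measurableSpace]) ω₀ = (μ[Fl|𝓕 t]) ω₀ :=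
      (loc1 ω₀ hmem).trans (loc2 ω₀ hmem)
    rw [e1]
    linarith [c1 ω₀, c2 ω₀, c4 ω₀, c5 ω₀]

end MainAux

/-- Lemma 3.2: for every `ε > 0` there is `h' > 0` such that for every
`h ∈ (0,h')` and every choice of `ε`-optimizer families `ρ̄, τ̄` on the grid, for all stopping
times `ρ₀, τ₀`: a.s. `X_{ρ₀} > E[U(ρ₀, τ_h(ρ₀)) | 𝓕_{ρ₀}] − 2ε` and
`Y_{τ₀} < E[U(ρ_h(τ₀), τ₀) | 𝓕_{τ₀}] + 2ε`. -/
theorem approximation_lemma [Countable Ω] (μ : Measure Ω) [IsProbabilityMeasure μ]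
    (𝓕 : Filtration ℝ≥0∞ mΩ) (hsetup : UsualSetup μ 𝓕)
    (U : ℝ≥0∞ → ℝ≥0∞ → Ω → ℝ) (r : ℝ≥0∞ → ℝ) (hU : PayoffAssumption 𝓕 U r)
    (ε : ℝ) (hε : 0 < ε) :
    ∃ h' : ℝ, 0 < h' ∧ ∀ h : ℝ, 0 < h → h < h' →
      ∀ ρbar τbar : ℕ → Ω → ℝ≥0∞,
        IsOptRho1 μ 𝓕 U ε h ρbar → IsOptTau1 μ 𝓕 U ε h τbar →
        ∀ (ρ₀ τ₀ : Ω → ℝ≥0∞) (hρ₀ : IsStoppingTime 𝓕 (fun ω => (ρ₀ ω : WithTop ℝ≥0∞))) (hτ₀ : IsStoppingTime 𝓕 (fun ω => (τ₀ ω : WithTop ℝ≥0∞))),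
          (∀ᵐ ω ∂μ,
            (μ[fun ω' => U (ρ₀ ω') (evalAt (gridStrat h τbar) ρ₀ ω') ω' |
              hρ₀.measurableSpace]) ω - 2*ε < X1v μ 𝓕 U (ρ₀ ω) ω) ∧
          (∀ᵐ ω ∂μ,
            Y1v μ 𝓕 U (τ₀ ω) ω <
              (μ[fun ω' => U (evalAt (gridStrat h ρbar) τ₀ ω') (τ₀ ω') ω' |
                hτ₀.measurableSpace]) ω + 2*ε) := by
  obtain ⟨hc, -, hFinfty, -⟩ := hsetup
  have hrtend : Tendsto r (𝓝[>] (0 : ℝ≥0∞)) (𝓝 (0 : ℝ)) := hU.2.2.2.2.2.2.1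
  obtain ⟨u, hu, hsub⟩ :=
    (mem_nhdsGT_iff_exists_Ioo_subset' (by norm_num : (0 : ℝ≥0∞) < 1)).mp
      (hrtend (Iio_mem_nhds (half_pos hε)))
  have humin : 0 < min u 1 := lt_min hu one_pos
  have humin_ne : min u 1 ≠ ∞ := ((min_le_right u 1).trans_lt (by norm_num)).ne
  have htR : 0 < (min u 1).toReal := ENNReal.toReal_pos humin.ne' humin_ne
  refine ⟨(min u 1).toReal / 2, by positivity, ?_⟩
  intro h hh hh'
  have hr2 : r (ENNReal.ofReal (2 * h)) < ε / 2 := by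
    refine hsub ⟨ENNReal.ofReal_pos.mpr (by linarith), ?_⟩
    have h2h : 2 * h < (min u 1).toReal := by linarith
    have hlt : ENNReal.ofReal (2 * h) < min u 1 := by
      rw [← ENNReal.ofReal_toReal humin_ne]
      exact (ENNReal.ofReal_lt_ofReal_iff htR).mpr h2h
    exact hlt.trans_le (min_le_left u 1)
  intro ρbar τbar hOptRho hOptTau ρ₀ τ₀ hρ₀ hτ₀
  exact ⟨ae_of_all _ (main_aux μ 𝓕 hc hFinfty U r hU ε hε h hh hr2 τbar hOptTau ρ₀ hρ₀),
    ae_of_all _ (main_aux2 μ 𝓕 hc hFinfty U r hU ε hε h hh hr2 ρbar hOptRho τ₀ hτ₀)⟩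

end StoppingGames
end
end

section
/- Let τ₀ ∈ 𝒯 and let ν ∈ 𝒯 with ν ≥ τ₀. Then almost surely E[ess sup_{σ∈𝒯_ν} E[U(σ, τ₀) | 𝓕_ν] | 𝓕_{τ₀}] = ess sup_{σ∈𝒯_ν} E[U(σ, τ₀) | 𝓕_{τ₀}] = ess sup_{σ∈𝒯_{τ₀}} E[U(σ ∨ ν, τ₀) | 𝓕_{τ₀}]. -/
/-!
Common setup for "On the non-zero-sum stopping game ending at the maximum of the stopping
strategies".  Time is indexed by `[0,∞] = ℝ≥0∞`.  Since `Ω` is at most countable and `ℙ`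
charges every point, essential suprema/infima over families of stopping times coincide with
the pointwise ones, which is how they are formalized below.
-/

open MeasureTheory Filter Set
open scoped ENNReal Topology

noncomputable section

namespace StoppingGames

variable {Ω : Type*} [mΩ : MeasurableSpace Ω]

section AuxiliaryForStatement6

variable {Ω' : Type*}

lemma all_of_ae {mΩ' : MeasurableSpace Ω'} {μ : Measure Ω'} (hμ : ∀ ω : Ω', μ {ω} ≠ 0)
    {p : Ω' → Prop} (h : ∀ᵐ ω ∂μ, p ω) (ω : Ω') : p ω := by
  by_contra hc
  exact hμ ω (measure_mono_null (fun x hx => by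
    rw [Set.mem_singleton_iff.1 hx]; exact hc) (ae_iff.1 h))

lemma measurable_comp_countable [Countable Ω'] {mΩ' : MeasurableSpace Ω'} {α : Type*}
    [MeasurableSpace α] [MeasurableSingletonClass α] (g : Ω' → α) (hg : Measurable g)
    (F : α → Ω' → ℝ) (hF : ∀ a, Measurable (F a)) :
    Measurable fun ω => F (g ω) ω := by
  intro s hs
  have h : (fun ω => F (g ω) ω) ⁻¹' s = ⋃ ω₀ : Ω', (g ⁻¹' {g ω₀} ∩ F (g ω₀) ⁻¹' s) := by
    ext ω
    simp only [Set.mem_preimage, Set.mem_iUnion, Set.mem_inter_iff, Set.mem_singleton_iff]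
    constructor
    · intro hω; exact ⟨ω, rfl, hω⟩
    · rintro ⟨ω₀, h1, h2⟩; rw [h1]; exact h2
  rw [h]
  exact MeasurableSet.iUnion fun ω₀ => (hg (measurableSet_singleton _)).inter (hF _ hs)

lemma mem_atom_symm (m : MeasurableSpace Ω') {x y : Ω'}
    (h : y ∈ @measurableAtom Ω' m x) : x ∈ @measurableAtom Ω' m y := by
  by_contra hc
  simp only [measurableAtom, Set.mem_iInter] at hc
  push_neg at hc
  obtain ⟨s, hys, hs, hxs⟩ := hc
  exact @mem_of_mem_measurableAtom Ω' m x y h sᶜ hs.compl hxs hys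

lemma atom_eq_of_mem (m : MeasurableSpace Ω') {x y : Ω'}
    (h : y ∈ @measurableAtom Ω' m x) :
    @measurableAtom Ω' m y = @measurableAtom Ω' m x := by
  apply Set.Subset.antisymm
  · intro z hz
    simp only [measurableAtom, Set.mem_iInter]
    intro s hxs hs
    exact @mem_of_mem_measurableAtom Ω' m y z hz s hs
      (@mem_of_mem_measurableAtom Ω' m x y h s hs hxs)
  · intro z hz
    simp only [measurableAtom, Set.mem_iInter]
    intro s hys hs
    exact @mem_of_mem_measurableAtom Ω' m x z hz s hs
      (@mem_of_mem_measurableAtom Ω' m y x (mem_atom_symm m h) s hs hys)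

lemma eq_on_atom (m : MeasurableSpace Ω') {f : Ω' → ℝ} (hf : Measurable[m] f)
    {x y : Ω'} (h : y ∈ @measurableAtom Ω' m x) : f y = f x :=
  Set.mem_singleton_iff.1
    (@mem_of_mem_measurableAtom Ω' m x y h (f ⁻¹' {f x})
      (hf (measurableSet_singleton (f x))) rfl)

lemma measurable_of_atoms [Countable Ω'] (m : MeasurableSpace Ω') {f : Ω' → ℝ}
    (hf : ∀ x y, y ∈ @measurableAtom Ω' m x → f y = f x) : Measurable[m] f := by
  intro s hs
  have h : f ⁻¹' s = ⋃ (x : Ω') (_ : f x ∈ s), @measurableAtom Ω' m x := by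
    ext z
    simp only [Set.mem_preimage, Set.mem_iUnion]
    constructor
    · intro hz; exact ⟨z, hz, @mem_measurableAtom_self Ω' m z⟩
    · rintro ⟨x, hx, hzx⟩; rw [hf x z hzx]; exact hx
  rw [h]
  exact MeasurableSet.iUnion fun x => MeasurableSet.iUnion fun _ =>
    @MeasurableSet.measurableAtom_of_countable Ω' m _ x

end AuxiliaryForStatement6

/-- a step in the proof of Lemma 3.2: for stopping times `τ₀ ≤ ν`, almost
surely `E[ess sup_{σ∈𝒯_ν} E[U(σ,τ₀)|𝓕_ν] | 𝓕_{τ₀}] = ess sup_{σ∈𝒯_ν} E[U(σ,τ₀)|𝓕_{τ₀}]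
= ess sup_{σ∈𝒯_{τ₀}} E[U(σ ∨ ν, τ₀)|𝓕_{τ₀}]`. -/
theorem condexp_esssup_exchange [Countable Ω] (μ : Measure Ω) [IsProbabilityMeasure μ]
    (𝓕 : Filtration ℝ≥0∞ mΩ) (hsetup : UsualSetup μ 𝓕)
    (U : ℝ≥0∞ → ℝ≥0∞ → Ω → ℝ)
    (hUbd : ∃ M : ℝ, ∀ s t ω, |U s t ω| ≤ M)
    (hUmeas : ∀ s t : ℝ≥0∞, Measurable[𝓕 (s ⊔ t)] (U s t))
    (hUlim : LimitsAtInfty U)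
    (τ₀ ν : Ω → ℝ≥0∞) (hτ₀ : IsStoppingTime 𝓕 (fun ω => (τ₀ ω : WithTop ℝ≥0∞)))
    (hν : IsStoppingTime 𝓕 (fun ω => (ν ω : WithTop ℝ≥0∞)))
    (hle : ∀ ω, τ₀ ω ≤ ν ω) :
    ∀ᵐ ω ∂μ,
      (μ[fun ω' => ⨆ σ : STge 𝓕 ν,
            (μ[fun ω'' => U (σ.1 ω'') (τ₀ ω'') ω'' | hν.measurableSpace]) ω' |
          hτ₀.measurableSpace]) ω
        = (⨆ σ : STge 𝓕 ν,
            (μ[fun ω' => U (σ.1 ω') (τ₀ ω') ω' | hτ₀.measurableSpace]) ω) ∧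
      (⨆ σ : STge 𝓕 ν, (μ[fun ω' => U (σ.1 ω') (τ₀ ω') ω' | hτ₀.measurableSpace]) ω)
        = ⨆ σ : STge 𝓕 τ₀,
            (μ[fun ω' => U (σ.1 ω' ⊔ ν ω') (τ₀ ω') ω' | hτ₀.measurableSpace]) ω := by
  classical
  obtain ⟨M, hM⟩ := hUbd
  have hcharge : ∀ ω : Ω, μ {ω} ≠ 0 := hsetup.1
  haveI : Nonempty Ω := by
    by_contra h
    rw [not_nonempty_iff] at h
    have h1 : (1 : ℝ≥0∞) = 0 := by
      rw [← measure_univ (μ := μ), Set.univ_eq_empty_iff.2 h, measure_empty]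
    exact one_ne_zero h1
  have hMnn : 0 ≤ M := le_trans (abs_nonneg _) (hM 0 0 (Classical.arbitrary Ω))
  have hm : hν.measurableSpace ≤ mΩ := hν.measurableSpace_le_of_le fun ω => WithTop.coe_le_coe.2 le_top
  have hm₀m : hτ₀.measurableSpace ≤ hν.measurableSpace := hτ₀.measurableSpace_mono hν (fun ω => WithTop.coe_le_coe.2 (hle ω))
  have hm₀ : hτ₀.measurableSpace ≤ mΩ := hm₀m.trans hm
  haveI : SigmaFinite (μ.trim hm) := by infer_instance
  haveI : SigmaFinite (μ.trim hm₀) := by infer_instance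
  haveI hne : Nonempty (STge 𝓕 ν) := ⟨⟨ν, hν, fun _ => le_rfl⟩⟩
  haveI hne₀ : Nonempty (STge 𝓕 τ₀) := ⟨⟨τ₀, hτ₀, fun _ => le_rfl⟩⟩
  have hstmeas : ∀ (σ : Ω → ℝ≥0∞), IsStoppingTime 𝓕 (fun ω => (σ ω : WithTop ℝ≥0∞)) → Measurable σ := fun σ hσ =>
    by simpa using (hσ.measurable.mono (hσ.measurableSpace_le_of_le fun ω => WithTop.coe_le_coe.2 le_top) le_rfl).untopD (0 : ℝ≥0∞)
  have hτ₀meas : Measurable τ₀ := hstmeas τ₀ hτ₀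
  have hUm : ∀ s t : ℝ≥0∞, Measurable (U s t) := fun s t => (hUmeas s t).mono (𝓕.le _) le_rfl
  have humeas : ∀ (σ : Ω → ℝ≥0∞), Measurable σ →
      Measurable fun ω' => U (σ ω') (τ₀ ω') ω' := fun σ hσ =>
    measurable_comp_countable (fun ω' => (σ ω', τ₀ ω')) (hσ.prodMk hτ₀meas)
      (fun p => U p.1 p.2) (fun p => hUm p.1 p.2)
  have huint : ∀ (σ : Ω → ℝ≥0∞), Measurable σ →
      Integrable (fun ω' => U (σ ω') (τ₀ ω') ω') μ := fun σ hσ =>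
    Integrable.mono' (integrable_const M) ((humeas σ hσ).aestronglyMeasurable)
      (ae_of_all _ fun ω' => by rw [Real.norm_eq_abs]; exact hM _ _ _)
  have hcondbd : ∀ (f : Ω → ℝ) (mm : MeasurableSpace Ω), (∀ ω', |f ω'| ≤ M) →
      ∀ ω', |(μ[f|mm]) ω'| ≤ M := by
    intro f mm hf ω'
    exact all_of_ae hcharge
      (ae_bdd_condExp_of_ae_bdd (R := ⟨M, hMnn⟩) (ae_of_all _ fun x => hf x)) ω'
  have hbdd1 : ∀ ω, BddAbove (Set.range fun σ : STge 𝓕 ν =>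
      (μ[fun ω'' => U (σ.1 ω'') (τ₀ ω'') ω''|hν.measurableSpace]) ω) := fun ω =>
    ⟨M, by rintro x ⟨σ, rfl⟩; exact (abs_le.1 (hcondbd _ hν.measurableSpace (fun ω' => hM _ _ _) ω)).2⟩
  have hbdd1' : ∀ ω, BddAbove (Set.range fun σ : STge 𝓕 ν =>
      (μ[fun ω' => U (σ.1 ω') (τ₀ ω') ω'|hτ₀.measurableSpace]) ω) := fun ω =>
    ⟨M, by rintro x ⟨σ, rfl⟩; exact (abs_le.1 (hcondbd _ hτ₀.measurableSpace (fun ω' => hM _ _ _) ω)).2⟩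
  have hbdd2 : ∀ ω, BddAbove (Set.range fun σ : STge 𝓕 τ₀ =>
      (μ[fun ω' => U (σ.1 ω' ⊔ ν ω') (τ₀ ω') ω'|hτ₀.measurableSpace]) ω) := fun ω =>
    ⟨M, by rintro x ⟨σ, rfl⟩; exact (abs_le.1 (hcondbd _ hτ₀.measurableSpace (fun ω' => hM _ _ _) ω)).2⟩
  set G : Ω → ℝ := fun ω' => ⨆ σ : STge 𝓕 ν,
      (μ[fun ω'' => U (σ.1 ω'') (τ₀ ω'') ω''|hν.measurableSpace]) ω' with hG_def
  have hGconst : ∀ x y, y ∈ @measurableAtom Ω hν.measurableSpace x → G y = G x := by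
    intro x y hy
    simp only [hG_def]
    exact iSup_congr fun σ => eq_on_atom hν.measurableSpace (stronglyMeasurable_condExp.measurable) hy
  have hGmeas : Measurable[hν.measurableSpace] G := measurable_of_atoms hν.measurableSpace hGconst
  have hGbd : ∀ ω', |G ω'| ≤ M := by
    intro ω'
    rw [abs_le]
    constructor
    · calc -M ≤ (μ[fun ω'' => U (ν ω'') (τ₀ ω'') ω''|hν.measurableSpace]) ω' :=
            (abs_le.1 (hcondbd _ hν.measurableSpace (fun _ => hM _ _ _) ω')).1
        _ ≤ G ω' := le_ciSup (hbdd1 ω') ⟨ν, hν, fun _ => le_rfl⟩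
    · exact ciSup_le fun σ => (abs_le.1 (hcondbd _ hν.measurableSpace (fun _ => hM _ _ _) ω')).2
  have hGint : Integrable G μ := Integrable.mono' (integrable_const M)
    ((hGmeas.mono hm le_rfl).aestronglyMeasurable)
    (ae_of_all _ fun ω' => by rw [Real.norm_eq_abs]; exact hGbd ω')
  have h1ge : ∀ ω, (⨆ σ : STge 𝓕 ν, (μ[fun ω' => U (σ.1 ω') (τ₀ ω') ω'|hτ₀.measurableSpace]) ω)
      ≤ (μ[G|hτ₀.measurableSpace]) ω := by
    intro ω
    refine ciSup_le fun σ => ?_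
    have e1 : μ[fun ω' => U (σ.1 ω') (τ₀ ω') ω'|hτ₀.measurableSpace]
        =ᵐ[μ] μ[μ[fun ω' => U (σ.1 ω') (τ₀ ω') ω'|hν.measurableSpace]|hτ₀.measurableSpace] :=
      (condExp_condExp_of_le hm₀m hm).symm
    have e2 : μ[μ[fun ω' => U (σ.1 ω') (τ₀ ω') ω'|hν.measurableSpace]|hτ₀.measurableSpace] ≤ᵐ[μ] μ[G|hτ₀.measurableSpace] := by
      refine condExp_mono integrable_condExp hGint (ae_of_all _ fun ω' => ?_)
      exact le_ciSup (hbdd1 ω') σ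
    exact all_of_ae hcharge (e1.le.trans e2) ω
  have h1le : ∀ ω, (μ[G|hτ₀.measurableSpace]) ω
      ≤ ⨆ σ : STge 𝓕 ν, (μ[fun ω' => U (σ.1 ω') (τ₀ ω') ω'|hτ₀.measurableSpace]) ω := by
    intro ω
    refine le_of_forall_pos_le_add fun ε hε => ?_
    have hchoice : ∀ a : Ω, ∃ σ : STge 𝓕 ν,
        G a - ε < (μ[fun ω'' => U (σ.1 ω'') (τ₀ ω'') ω''|hν.measurableSpace]) a := by
      intro a
      exact exists_lt_of_lt_ciSup (sub_lt_self (G a) hε :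
        G a - ε < ⨆ σ : STge 𝓕 ν, (μ[fun ω'' => U (σ.1 ω'') (τ₀ ω'') ω''|hν.measurableSpace]) a)
    choose sel hsel using hchoice
    let st : Setoid Ω := ⟨fun x y => y ∈ @measurableAtom Ω hν.measurableSpace x,
      ⟨fun x => @mem_measurableAtom_self Ω hν.measurableSpace x, fun {x y} h => mem_atom_symm hν.measurableSpace h,
        fun {x y z} h1 h2 => by rw [← atom_eq_of_mem hν.measurableSpace h1]; exact h2⟩⟩
    let c : Ω → Ω := fun x => Quotient.out (Quotient.mk st x)
    have hc_mem : ∀ x, c x ∈ @measurableAtom Ω hν.measurableSpace x := fun x =>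
      mem_atom_symm hν.measurableSpace (Quotient.mk_out (s := st) x)
    have hc_eq : ∀ x y, y ∈ @measurableAtom Ω hν.measurableSpace x → c y = c x := fun x y h =>
      congrArg Quotient.out (Quotient.sound (a := x) (b := y) h).symm
    let σS : Ω → ℝ≥0∞ := fun ω' => (sel (c ω')).1 ω'
    have hσSν : ∀ ω', ν ω' ≤ σS ω' := fun ω' => (sel (c ω')).2.2 ω'
    have hσSst : IsStoppingTime 𝓕 (fun ω => (σS ω : WithTop ℝ≥0∞)) := by
      intro t
      simp only [WithTop.coe_le_coe]
      have hset : {ω' | σS ω' ≤ t}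
          = ⋃ a : Ω, (@measurableAtom Ω hν.measurableSpace a ∩ {ω' | (sel (c a)).1 ω' ≤ t}) := by
        ext ω'
        simp only [Set.mem_setOf_eq, Set.mem_iUnion, Set.mem_inter_iff]
        constructor
        · intro hω'; exact ⟨ω', @mem_measurableAtom_self Ω hν.measurableSpace ω', hω'⟩
        · rintro ⟨a, ha, hσ⟩
          show (sel (c ω')).1 ω' ≤ t
          rw [hc_eq a ω' ha]; exact hσ
      rw [show {ω | σS ω ≤ t} = _ from hset]
      refine MeasurableSet.iUnion fun a => ?_
      have hatom : MeasurableSet[hν.measurableSpace] (@measurableAtom Ω hν.measurableSpace a) :=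
        @MeasurableSet.measurableAtom_of_countable Ω hν.measurableSpace _ a
      have hatom' : MeasurableSet[𝓕 t] (@measurableAtom Ω hν.measurableSpace a ∩ {ω' | ν ω' ≤ t}) :=
        by simpa only [WithTop.coe_le_coe] using ((hν.measurableSet _).1 hatom).2 t
      have hsub : {ω' | (sel (c a)).1 ω' ≤ t} ⊆ {ω' | ν ω' ≤ t} :=
        fun ω' h => le_trans ((sel (c a)).2.2 ω') h
      have heq2 : @measurableAtom Ω hν.measurableSpace a ∩ {ω' | (sel (c a)).1 ω' ≤ t}
          = (@measurableAtom Ω hν.measurableSpace a ∩ {ω' | ν ω' ≤ t}) ∩ {ω' | (sel (c a)).1 ω' ≤ t} := by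
        rw [Set.inter_assoc, Set.inter_eq_self_of_subset_right hsub]
      rw [heq2]
      exact hatom'.inter (by simpa only [WithTop.coe_le_coe] using (sel (c a)).2.1 t)
    have hσSmem : σS ∈ STge 𝓕 ν := ⟨hσSst, hσSν⟩
    have hkey : ∀ ω', G ω' ≤ (μ[fun ω'' => U (σS ω'') (τ₀ ω'') ω''|hν.measurableSpace]) ω' + ε := by
      intro ω'
      have haA : c ω' ∈ @measurableAtom Ω hν.measurableSpace ω' := hc_mem ω'
      have hAmeas : MeasurableSet[hν.measurableSpace] (@measurableAtom Ω hν.measurableSpace ω') :=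
        @MeasurableSet.measurableAtom_of_countable Ω hν.measurableSpace _ ω'
      have hfun : (@measurableAtom Ω hν.measurableSpace ω').indicator (fun ω'' => U (σS ω'') (τ₀ ω'') ω'')
          = (@measurableAtom Ω hν.measurableSpace ω').indicator
              (fun ω'' => U ((sel (c ω')).1 ω'') (τ₀ ω'') ω'') := by
        funext x
        by_cases hx : x ∈ @measurableAtom Ω hν.measurableSpace ω'
        · rw [Set.indicator_of_mem hx, Set.indicator_of_mem hx]
          show U ((sel (c x)).1 x) (τ₀ x) x = _
          rw [hc_eq ω' x hx]
        · rw [Set.indicator_of_notMem hx, Set.indicator_of_notMem hx]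
      have hind1 := condExp_indicator (μ := μ) (m := hν.measurableSpace)
        (huint σS (hstmeas σS hσSst)) hAmeas
      have hind2 := condExp_indicator (μ := μ) (m := hν.measurableSpace)
        (huint (sel (c ω')).1 (hstmeas _ (sel (c ω')).2.1)) hAmeas
      have hout : (@measurableAtom Ω hν.measurableSpace ω').indicator
            (μ[fun ω'' => U (σS ω'') (τ₀ ω'') ω''|hν.measurableSpace]) =ᵐ[μ]
          (@measurableAtom Ω hν.measurableSpace ω').indicator
            (μ[fun ω'' => U ((sel (c ω')).1 ω'') (τ₀ ω'') ω''|hν.measurableSpace]) := by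
        refine hind1.symm.trans ?_
        rw [hfun]
        exact hind2
      have hpt := all_of_ae hcharge hout ω'
      rw [Set.indicator_of_mem (@mem_measurableAtom_self Ω hν.measurableSpace ω'),
          Set.indicator_of_mem (@mem_measurableAtom_self Ω hν.measurableSpace ω')] at hpt
      have hconst : (μ[fun ω'' => U ((sel (c ω')).1 ω'') (τ₀ ω'') ω''|hν.measurableSpace]) (c ω')
          = (μ[fun ω'' => U ((sel (c ω')).1 ω'') (τ₀ ω'') ω''|hν.measurableSpace]) ω' :=
        eq_on_atom hν.measurableSpace stronglyMeasurable_condExp.measurable haA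
      have hGa : G (c ω') = G ω' := hGconst ω' (c ω') haA
      have hlt := hsel (c ω')
      rw [hGa, hconst] at hlt
      rw [hpt]
      linarith
    have tower := condExp_condExp_of_le (μ := μ)
      (f := fun ω'' => U (σS ω'') (τ₀ ω'') ω'') hm₀m hm
    have hca := condExp_add (μ := μ) (m := hτ₀.measurableSpace)
      (f := μ[fun ω'' => U (σS ω'') (τ₀ ω'') ω''|hν.measurableSpace]) (g := fun _ => ε)
      integrable_condExp (integrable_const ε)
    have hcc := condExp_const (μ := μ) hm₀ ε
    have h1 : μ[G|hτ₀.measurableSpace] ≤ᵐ[μ]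
        μ[(μ[fun ω'' => U (σS ω'') (τ₀ ω'') ω''|hν.measurableSpace]) + (fun _ => ε)|hτ₀.measurableSpace] :=
      condExp_mono hGint (integrable_condExp.add (integrable_const ε))
        (ae_of_all _ fun ω' => hkey ω')
    have hfinal : (μ[G|hτ₀.measurableSpace]) ω ≤ (μ[fun ω'' => U (σS ω'') (τ₀ ω'') ω''|hτ₀.measurableSpace]) ω + ε := by
      have e1 := all_of_ae hcharge h1 ω
      have e2 := all_of_ae hcharge hca ω
      have e4 := all_of_ae hcharge tower ω
      have e3 : (μ[(fun _ => ε : Ω → ℝ)|hτ₀.measurableSpace]) ω = ε := congrFun hcc ω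
      calc (μ[G|hτ₀.measurableSpace]) ω
          ≤ (μ[(μ[fun ω'' => U (σS ω'') (τ₀ ω'') ω''|hν.measurableSpace]) + (fun _ => ε)|hτ₀.measurableSpace]) ω := e1
        _ = (μ[μ[fun ω'' => U (σS ω'') (τ₀ ω'') ω''|hν.measurableSpace]|hτ₀.measurableSpace]) ω
            + (μ[(fun _ => ε : Ω → ℝ)|hτ₀.measurableSpace]) ω := e2
        _ = (μ[fun ω'' => U (σS ω'') (τ₀ ω'') ω''|hτ₀.measurableSpace]) ω + ε := by rw [e4, e3]
    calc (μ[G|hτ₀.measurableSpace]) ω ≤ (μ[fun ω'' => U (σS ω'') (τ₀ ω'') ω''|hτ₀.measurableSpace]) ω + ε := hfinal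
      _ ≤ (⨆ σ : STge 𝓕 ν, (μ[fun ω' => U (σ.1 ω') (τ₀ ω') ω'|hτ₀.measurableSpace]) ω) + ε :=
          add_le_add_left (le_ciSup (hbdd1' ω) ⟨σS, hσSmem⟩) ε
  refine ae_of_all _ fun ω => ⟨le_antisymm (h1le ω) (h1ge ω), ?_⟩
  apply le_antisymm
  · refine ciSup_le fun σ => ?_
    have hmem : σ.1 ∈ STge 𝓕 τ₀ := ⟨σ.2.1, fun ω' => (hle ω').trans (σ.2.2 ω')⟩
    have hfe : (fun ω' => U (σ.1 ω' ⊔ ν ω') (τ₀ ω') ω')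
        = fun ω' => U (σ.1 ω') (τ₀ ω') ω' := by
      funext ω'; rw [sup_eq_left.2 (σ.2.2 ω')]
    calc (μ[fun ω' => U (σ.1 ω') (τ₀ ω') ω'|hτ₀.measurableSpace]) ω
        = (μ[fun ω' => U (σ.1 ω' ⊔ ν ω') (τ₀ ω') ω'|hτ₀.measurableSpace]) ω := by rw [hfe]
      _ ≤ _ := le_ciSup (hbdd2 ω) ⟨σ.1, hmem⟩
  · refine ciSup_le fun σ => ?_
    have hst : IsStoppingTime 𝓕 (fun ω' => ((σ.1 ω' ⊔ ν ω' : ℝ≥0∞) : WithTop ℝ≥0∞)) := σ.2.1.max hν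
    have hmem : (fun ω' => σ.1 ω' ⊔ ν ω') ∈ STge 𝓕 ν := ⟨hst, fun ω' => le_sup_right⟩
    exact le_ciSup (hbdd1' ω) (⟨fun ω' => σ.1 ω' ⊔ ν ω', hmem⟩ : STge 𝓕 ν)

end StoppingGames
end
end
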